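/- For every natural m ≥ 1, the limit as s → 2m−1 of [ π x^{s−1}/(2 Γ(s) cos(πs/2)) + (−1)^{m−1} ζ(s−2m+2) x^{2m−2}/(2m−2)! ] equals ((−1)^m x^{2m−2}/(2m−2)!) · (log x − H_{2m−2}), for any fixed real x > 0. -/

import Mathlib

open Real Filter

lemma aux_sum_range_three (w : ℂ) : ∑ i ∈ Finset.range 3, w ^ i / i.factorial = 1 + w + w ^ 2 / 2 := by
  rw [Finset.sum_range_succ, Finset.sum_range_succ, Finset.sum_range_one]
  norm_num

lemma aux_norm_sin_sub_self {u : ℂ} (hu : ‖u‖ ≤ 1) :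
    ‖Complex.sin u - u‖ ≤ ‖u‖ ^ 3 := by
  have h1 := Complex.exp_bound (x := u * Complex.I) (by simpa using hu) (n := 3) (by norm_num)
  have h2 := Complex.exp_bound (x := -u * Complex.I) (by simpa using hu) (n := 3) (by norm_num)
  rw [aux_sum_range_three] at h1 h2
  have key : Complex.sin u - u =
      ((Complex.exp (-u * Complex.I) - (1 + -u * Complex.I + (-u * Complex.I) ^ 2 / 2)) -
        (Complex.exp (u * Complex.I) - (1 + u * Complex.I + (u * Complex.I) ^ 2 / 2))) *
        Complex.I / 2 := by
    rw [Complex.sin]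
    ring_nf
    rw [Complex.I_sq]
    ring
  rw [key]
  have habs : ‖u * Complex.I‖ = ‖u‖ := by simp
  have habs2 : ‖-u * Complex.I‖ = ‖u‖ := by simp
  rw [habs] at h1; rw [habs2] at h2
  calc ‖_‖ ≤ (‖Complex.exp (-u * Complex.I) - (1 + -u * Complex.I + (-u * Complex.I) ^ 2 / 2)‖
        + ‖Complex.exp (u * Complex.I) - (1 + u * Complex.I + (u * Complex.I) ^ 2 / 2)‖) *
        ‖Complex.I‖ / 2 := by
        rw [norm_div, norm_mul]
        gcongr
        · exact norm_sub_le _ _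
        · simp
    _ ≤ ‖u‖ ^ 3 := by
        rw [Complex.norm_I]
        have h3 : (0:ℝ) ≤ ‖u‖ ^ 3 := by positivity
        norm_num [Nat.factorial] at h1 h2 ⊢
        nlinarith

lemma aux_tendsto_sin_div : Tendsto (fun u : ℂ => Complex.sin u / u) (nhdsWithin 0 {(0:ℂ)}ᶜ) (nhds 1) := by
  have h := hasDerivAt_iff_tendsto_slope.mp (Complex.hasDerivAt_sin 0)
  rw [Complex.cos_zero] at h
  refine h.congr fun u => ?_
  rw [slope_def_field, Complex.sin_zero, sub_zero, sub_zero]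

lemma aux_tendsto_cube : Tendsto (fun u : ℂ => (u - Complex.sin u) / u ^ 2)
    (nhdsWithin 0 {(0:ℂ)}ᶜ) (nhds 0) := by
  refine squeeze_zero_norm' (a := fun u : ℂ => ‖u‖) ?_ ?_
  · have h1 : ∀ᶠ u : ℂ in nhdsWithin 0 {(0:ℂ)}ᶜ, ‖u‖ ≤ 1 := by
      have : ∀ᶠ u : ℂ in nhds 0, ‖u‖ ≤ 1 := by
        have := Metric.closedBall_mem_nhds (0:ℂ) one_pos
        filter_upwards [this] with u hu
        simpa [Complex.dist_eq] using hu
      exact this.filter_mono nhdsWithin_le_nhds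
    filter_upwards [h1, self_mem_nhdsWithin] with u hu hne
    have hne' : u ≠ 0 := hne
    have hb := aux_norm_sin_sub_self hu
    have habs : ‖(u - Complex.sin u) / u ^ 2‖ = ‖Complex.sin u - u‖ / ‖u‖ ^ 2 := by
      rw [norm_div, norm_pow, norm_sub_rev]
    rw [habs]
    have hpos : 0 < ‖u‖ := by simpa using hne'
    rw [div_le_iff₀ (by positivity)]
    calc ‖Complex.sin u - u‖ ≤ ‖u‖ ^ 3 := hb
      _ = ‖u‖ * ‖u‖ ^ 2 := by ring
  · have : Tendsto (fun u : ℂ => ‖u‖) (nhds 0) (nhds 0) := by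
      simpa using (continuous_norm.tendsto (0:ℂ))
    exact this.mono_left nhdsWithin_le_nhds

lemma aux_tendsto_D : Tendsto (fun t : ℂ => (π:ℂ) / (2 * Complex.sin ((π:ℂ) * t / 2)) - 1 / t)
    (nhdsWithin 0 {(0:ℂ)}ᶜ) (nhds 0) := by
  have hpi : ((π:ℝ):ℂ) ≠ 0 := Complex.ofReal_ne_zero.mpr Real.pi_ne_zero
  have h_u : Tendsto (fun t : ℂ => (π:ℂ) * t / 2) (nhdsWithin 0 {(0:ℂ)}ᶜ)
      (nhdsWithin 0 {(0:ℂ)}ᶜ) := by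
    rw [tendsto_nhdsWithin_iff]
    constructor
    · have hc : Tendsto (fun t : ℂ => (π:ℂ) * t / 2) (nhds 0) (nhds ((π:ℂ) * 0 / 2)) :=
        ((continuous_const.mul continuous_id).div_const 2).tendsto 0
      simpa using hc.mono_left nhdsWithin_le_nhds
    · filter_upwards [self_mem_nhdsWithin] with t ht
      have ht' : t ≠ 0 := ht
      simp only [Set.mem_compl_iff, Set.mem_singleton_iff]
      exact div_ne_zero (mul_ne_zero hpi ht') two_ne_zero
  have hmain : Tendsto (fun t : ℂ => (π:ℂ) / 2 *
      (((π:ℂ) * t / 2 - Complex.sin ((π:ℂ) * t / 2)) / ((π:ℂ) * t / 2) ^ 2) *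
      (Complex.sin ((π:ℂ) * t / 2) / ((π:ℂ) * t / 2))⁻¹)
      (nhdsWithin 0 {(0:ℂ)}ᶜ) (nhds ((π:ℂ) / 2 * 0 * 1⁻¹)) := by
    exact (Tendsto.const_mul _ (aux_tendsto_cube.comp h_u)).mul
      ((aux_tendsto_sin_div.comp h_u).inv₀ one_ne_zero)
  rw [show (π:ℂ) / 2 * 0 * 1⁻¹ = 0 by ring] at hmain
  refine hmain.congr' ?_
  have h2 : ∀ᶠ t : ℂ in nhdsWithin 0 {(0:ℂ)}ᶜ, ‖t‖ < 2 := by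
    have : ∀ᶠ t : ℂ in nhds 0, ‖t‖ < 2 := by
      filter_upwards [Metric.ball_mem_nhds (0:ℂ) two_pos] with t ht
      simpa [Complex.dist_eq] using ht
    exact this.filter_mono nhdsWithin_le_nhds
  filter_upwards [h2, self_mem_nhdsWithin] with t htlt htne
  have ht : t ≠ 0 := htne
  have hu0 : (π:ℂ) * t / 2 ≠ 0 := by
    simp only [div_ne_zero_iff, mul_ne_zero_iff]
    exact ⟨⟨hpi, ht⟩, two_ne_zero⟩
  have hsin : Complex.sin ((π:ℂ) * t / 2) ≠ 0 := by
    intro h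
    obtain ⟨kk, hkk⟩ := Complex.sin_eq_zero_iff.mp h
    have htk : t = 2 * kk := by
      have h1 : (π:ℂ) * t = (π:ℂ) * (2 * kk) := by linear_combination 2 * hkk
      exact mul_left_cancel₀ hpi h1
    rw [htk] at htlt
    have habs : ‖2 * (kk:ℂ)‖ = 2 * |(kk:ℝ)| := by
      rw [norm_mul, Complex.norm_intCast]
      norm_num
    rw [habs] at htlt
    have hk1 : |(kk:ℝ)| < 1 := by linarith
    have hk0 : kk = 0 := by
      have h2 : |kk| < 1 := by exact_mod_cast hk1
      exact Int.abs_lt_one_iff.mp h2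
    rw [hk0] at htk
    norm_num at htk
    exact ht htk
  set u : ℂ := (π:ℂ) * t / 2 with hu
  set S := Complex.sin u with hS
  have h1t : 1 / t = (π:ℂ) / (2 * u) := by
    rw [hu, show (2:ℂ) * ((π:ℂ) * t / 2) = (π:ℂ) * t by ring,
      show ((π:ℂ)) / ((π:ℂ) * t) = (π:ℂ) * 1 / ((π:ℂ) * t) by rw [mul_one],
      mul_div_mul_left 1 t hpi]
  rw [inv_div, h1t]
  field_simp


lemma aux_cos_add_nat_pi (z : ℂ) (k : ℕ) : Complex.cos (z + k * π) = (-1) ^ k * Complex.cos z := by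
  induction k with
  | zero => simp
  | succ n ih =>
    have h : z + ((n + 1 : ℕ) : ℂ) * π = (z + n * π) + π := by push_cast; ring
    rw [h, Complex.cos_add_pi, ih, pow_succ]
    ring

lemma aux_limit_pole_cancellation (k : ℕ) (x : ℝ) (hx : 0 < x) :
    Tendsto (fun s : ℂ =>
        (π : ℂ) * (x : ℂ) ^ (s - 1) / (2 * Complex.Gamma s * Complex.cos (π * s / 2)) +
          (-1) ^ k * riemannZeta (s - 2 * ((k+1:ℕ):ℂ) + 2) * (x : ℂ) ^ (2 * k) /
            ((2 * k).factorial : ℂ))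
      (nhdsWithin (2 * ((k+1:ℕ):ℂ) - 1 : ℂ) {(2 * ((k+1:ℕ):ℂ) - 1 : ℂ)}ᶜ)
      (nhds ((-1) ^ (k+1) * (x : ℝ) ^ (2 * k) / ((2 * k).factorial : ℂ) *
        ((Real.log x : ℂ) - ((harmonic (2 * k) : ℝ) : ℂ)))) := by
  have hxne : ((x:ℝ):ℂ) ≠ 0 := Complex.ofReal_ne_zero.mpr hx.ne'
  have hNe : (((2*k).factorial : ℕ) : ℂ) ≠ 0 := Nat.cast_ne_zero.mpr (Nat.factorial_ne_zero _)
  have hlog : Complex.log ((x:ℝ):ℂ) = ((Real.log x : ℝ) : ℂ) := (Complex.ofReal_log hx.le).symm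
  -- the shifted function g
  set g : ℂ → ℂ := fun t => ((x:ℝ):ℂ) ^ (t + ((2*k : ℕ):ℂ)) * (Complex.Gamma (t + ((2*k:ℕ):ℂ) + 1))⁻¹ with hgdef
  have hGamval : Complex.Gamma (((2*k:ℕ):ℂ) + 1) = (((2*k).factorial : ℕ) : ℂ) :=
    Complex.Gamma_nat_eq_factorial _
  -- derivative of the cpow part
  have hpow : HasDerivAt (fun t : ℂ => ((x:ℝ):ℂ) ^ (t + ((2*k:ℕ):ℂ)))
      (((x:ℝ):ℂ) ^ (((2*k:ℕ)):ℂ) * Complex.log ((x:ℝ):ℂ)) 0 := by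
    have h1 : HasDerivAt (fun w : ℂ => ((x:ℝ):ℂ) ^ w)
        (((x:ℝ):ℂ) ^ (((2*k:ℕ)):ℂ) * Complex.log ((x:ℝ):ℂ))
        ((fun t : ℂ => t + ((2*k:ℕ):ℂ)) 0) := by
      simpa using (Complex.hasStrictDerivAt_const_cpow (Or.inl hxne)).hasDerivAt
    have h2 : HasDerivAt (fun t : ℂ => t + ((2*k:ℕ):ℂ)) 1 0 := (hasDerivAt_id 0).add_const _
    simpa [Function.comp_def] using h1.comp 0 h2
  -- derivative of the Gamma part
  have hGam : HasDerivAt (fun t : ℂ => Complex.Gamma (t + ((2*k:ℕ):ℂ) + 1))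
      ((((2*k).factorial : ℕ) : ℂ) * (-(Real.eulerMascheroniConstant:ℂ) + (harmonic (2*k) : ℂ))) 0 := by
    have h1 : HasDerivAt Complex.Gamma
        ((((2*k).factorial : ℕ) : ℂ) * (-(Real.eulerMascheroniConstant:ℂ) + (harmonic (2*k) : ℂ)))
        ((fun t : ℂ => t + ((2*k:ℕ):ℂ) + 1) 0) := by
      simpa using Complex.hasDerivAt_Gamma_nat (2*k)
    have h2 : HasDerivAt (fun t : ℂ => t + ((2*k:ℕ):ℂ) + 1) 1 0 :=
      ((hasDerivAt_id 0).add_const _).add_const _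
    simpa [Function.comp_def] using h1.comp 0 h2
  have hG0ne : Complex.Gamma ((0:ℂ) + ((2*k:ℕ):ℂ) + 1) ≠ 0 := by
    rw [zero_add, hGamval]; exact hNe
  have hgd : HasDerivAt g
      ((((x:ℝ):ℂ) ^ (2*k) / (((2*k).factorial : ℕ) : ℂ)) *
        ((Real.log x : ℂ) + (Real.eulerMascheroniConstant:ℂ) - (harmonic (2*k) : ℂ))) 0 := by
    have h3 := hpow.mul (hGam.inv hG0ne)
    refine h3.congr_deriv ?_
    rw [Pi.inv_apply, zero_add, hGamval, hlog, Complex.cpow_natCast]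
    field_simp
    ring
  have hg0 : g 0 = ((x:ℝ):ℂ) ^ (2*k) / (((2*k).factorial : ℕ) : ℂ) := by
    rw [hgdef]
    simp only [zero_add, hGamval, Complex.cpow_natCast]
    rw [div_eq_mul_inv]
  set c : ℂ := ((x:ℝ):ℂ) ^ (2*k) / (((2*k).factorial : ℕ) : ℂ) with hcdef
  -- L2 : difference quotient limit
  have hL2 : Tendsto (fun t : ℂ => (c - g t) / t) (nhdsWithin 0 {(0:ℂ)}ᶜ)
      (nhds (-(c * ((Real.log x : ℂ) + (Real.eulerMascheroniConstant:ℂ) - (harmonic (2*k) : ℂ))))) := by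
    have h := (hasDerivAt_iff_tendsto_slope.mp hgd).neg
    refine h.congr fun t => ?_
    rw [slope_def_field, hg0, sub_zero, ← neg_div, neg_sub]
  -- L1 : zeta limit
  have hmap1 : Tendsto (fun t : ℂ => t + 1) (nhdsWithin 0 {(0:ℂ)}ᶜ) (nhdsWithin 1 {(1:ℂ)}ᶜ) := by
    rw [tendsto_nhdsWithin_iff]
    constructor
    · have hc : Tendsto (fun t : ℂ => t + 1) (nhds 0) (nhds (0 + 1)) :=
        (continuous_id.add continuous_const).tendsto 0
      simpa using hc.mono_left nhdsWithin_le_nhds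
    · filter_upwards [self_mem_nhdsWithin] with t ht
      have ht' : t ≠ 0 := ht
      simp only [Set.mem_compl_iff, Set.mem_singleton_iff]
      intro hh
      exact ht' (by linear_combination hh)
  have hL1 : Tendsto (fun t : ℂ => (riemannZeta (t + 1) - 1 / t) * c) (nhdsWithin 0 {(0:ℂ)}ᶜ)
      (nhds ((Real.eulerMascheroniConstant:ℂ) * c)) := by
    have h := (tendsto_riemannZeta_sub_one_div.comp hmap1).mul_const c
    refine h.congr fun t => ?_
    simp only [Function.comp_apply, add_sub_cancel_right]
  -- L3 : correction term limit
  have hgc : Tendsto g (nhdsWithin 0 {(0:ℂ)}ᶜ) (nhds c) := by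
    have := hgd.differentiableAt.continuousAt.tendsto
    rw [hg0] at this
    exact this.mono_left nhdsWithin_le_nhds
  have hL3 : Tendsto (fun t : ℂ => ((π:ℂ) / (2 * Complex.sin ((π:ℂ) * t / 2)) - 1 / t) * g t)
      (nhdsWithin 0 {(0:ℂ)}ᶜ) (nhds 0) := by
    simpa using aux_tendsto_D.mul hgc
  -- combine
  have hsum := ((hL1.add hL2).sub hL3).const_mul ((-1:ℂ)^k)
  -- shift of variable
  have hshift : Tendsto (fun s : ℂ => s - (((2*k:ℕ):ℂ) + 1))
      (nhdsWithin (2 * ((k+1:ℕ):ℂ) - 1 : ℂ) {(2 * ((k+1:ℕ):ℂ) - 1 : ℂ)}ᶜ)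
      (nhdsWithin 0 {(0:ℂ)}ᶜ) := by
    have ha : (2 * ((k+1:ℕ):ℂ) - 1) = ((2*k:ℕ):ℂ) + 1 := by push_cast; ring
    rw [tendsto_nhdsWithin_iff]
    constructor
    · have hc : Tendsto (fun s : ℂ => s - (((2*k:ℕ):ℂ) + 1))
          (nhds (2 * ((k+1:ℕ):ℂ) - 1)) (nhds ((2 * ((k+1:ℕ):ℂ) - 1) - (((2*k:ℕ):ℂ) + 1))) :=
        (continuous_id.sub continuous_const).tendsto _
      have hzero : (2 * ((k+1:ℕ):ℂ) - 1) - (((2*k:ℕ):ℂ) + 1) = 0 := by push_cast; ring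
      rw [hzero] at hc
      exact hc.mono_left nhdsWithin_le_nhds
    · filter_upwards [self_mem_nhdsWithin] with s hs
      simp only [Set.mem_compl_iff, Set.mem_singleton_iff] at hs ⊢
      intro h0
      exact hs (by rw [ha]; exact sub_eq_zero.mp h0)
  have hfinal := hsum.comp hshift
  -- identify the limit value
  have hval : ((-1:ℂ)^k * ((Real.eulerMascheroniConstant:ℂ) * c +
      -(c * ((Real.log x : ℂ) + (Real.eulerMascheroniConstant:ℂ) - (harmonic (2*k) : ℂ))) - 0)) =
      ((-1) ^ (k+1) * ((x:ℝ):ℂ) ^ (2 * k) / (((2 * k).factorial : ℕ) : ℂ) *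
        ((Real.log x : ℂ) - ((harmonic (2 * k) : ℝ) : ℂ))) := by
    rw [hcdef, pow_succ]
    push_cast
    field_simp
    ring
  rw [hval] at hfinal
  -- pointwise identity
  refine hfinal.congr fun s => ?_
  simp only [Function.comp_apply]
  set t : ℂ := s - (((2*k:ℕ):ℂ) + 1) with htdef
  have hts : riemannZeta (s - 2 * ((k+1:ℕ):ℂ) + 2) = riemannZeta (t + 1) := by
    congr 1
    rw [htdef]; push_cast; ring
  have hxp : ((x:ℝ):ℂ) ^ (s - 1) = ((x:ℝ):ℂ) ^ (t + ((2*k:ℕ):ℂ)) := by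
    congr 1
    rw [htdef]; push_cast; ring
  have hGa : Complex.Gamma s = Complex.Gamma (t + ((2*k:ℕ):ℂ) + 1) := by
    congr 1
    rw [htdef]; push_cast; ring
  have hcos : Complex.cos ((π:ℂ) * s / 2) = (-1)^(k+1) * Complex.sin ((π:ℂ) * t / 2) := by
    have harg : (π:ℂ) * s / 2 = ((π:ℂ) * t / 2 + (π:ℂ)/2) + k * (π:ℂ) := by
      rw [htdef]; push_cast; ring
    rw [harg, aux_cos_add_nat_pi, Complex.cos_add_pi_div_two, pow_succ]
    ring
  rw [hgdef, hcdef] at *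
  rw [hts, hxp, hGa, hcos]
  simp only [div_eq_mul_inv, mul_inv, ← inv_pow, inv_neg, inv_one]
  ring

theorem limit_pole_cancellation (m : ℕ) (hm : 1 ≤ m) (x : ℝ) (hx : 0 < x) :
    Tendsto (fun s : ℂ =>
        (π : ℂ) * (x : ℂ) ^ (s - 1) / (2 * Complex.Gamma s * Complex.cos (π * s / 2)) +
          (-1) ^ (m - 1) * riemannZeta (s - 2 * m + 2) * (x : ℂ) ^ (2 * m - 2) /
            ((2 * m - 2).factorial : ℂ))
      (nhdsWithin (2 * m - 1 : ℂ) {(2 * m - 1 : ℂ)}ᶜ)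
      (nhds ((-1) ^ m * (x : ℂ) ^ (2 * m - 2) / ((2 * m - 2).factorial : ℂ) *
        ((Real.log x : ℂ) - ((harmonic (2 * m - 2) : ℝ) : ℂ)))) := by
  obtain ⟨k, rfl⟩ : ∃ k, m = k + 1 := ⟨m - 1, by omega⟩
  have h1 : 2 * (k + 1) - 2 = 2 * k := by omega
  have h2 : k + 1 - 1 = k := by omega
  simp only [h1, h2]
  exact aux_limit_pole_cancellation k x hx
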